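/- Let 0<β<1, b ∈ Λ̇_β on ℝⁿ, and Q = Q(c_Q, t) a cube centered at c_Q with side length t. For k ≥ 2 let 3^kQ = Q(c_Q, 3^k t). Then for every f ∈ L¹_loc and every x_Q ∈ Q, the sum Σ_{k≥2} ∫_{3^kQ \ 3^{k-1}Q} (t^n / |x_Q - z|^{2n}) |b(z) - b_{3Q}| |f(z)| dz ≤ C ‖b‖_{Λ̇_β} t^{β} M f(x) for every x ∈ Q, where M is the Hardy–Littlewood maximal operator and C depends only on n and β. -/

import Mathlib

open MeasureTheory ENNReal

/-- The axis-parallel cube in `ℝⁿ` with center `c` and side length `t`. -/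
def cube {n : ℕ} (c : EuclideanSpace ℝ (Fin n)) (t : ℝ) : Set (EuclideanSpace ℝ (Fin n)) :=
  {y | ∀ i, |y i - c i| ≤ t / 2}

/-- The Hardy–Littlewood maximal function `M f(x) = sup_{r>0} r^{-n} ∫_{B(x,r)} f`. -/
noncomputable def maxFun {n : ℕ} (f : EuclideanSpace ℝ (Fin n) → ℝ≥0∞)
    (x : EuclideanSpace ℝ (Fin n)) : ℝ≥0∞ :=
  ⨆ (r : ℝ) (_ : 0 < r), (ENNReal.ofReal r ^ n)⁻¹ * ∫⁻ y in Metric.ball x r, f y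

variable {n : ℕ}

lemma coord_le_dist (x y : EuclideanSpace ℝ (Fin n)) (i : Fin n) :
    |x i - y i| ≤ dist x y := by
  rw [EuclideanSpace.dist_eq, ← Real.sqrt_sq_eq_abs]
  apply Real.sqrt_le_sqrt
  have := Finset.single_le_sum (f := fun j => dist (x j) (y j) ^ 2)
    (fun j _ => sq_nonneg _) (Finset.mem_univ i)
  simpa [Real.dist_eq] using this

lemma dist_le_sqrt_mul {x y : EuclideanSpace ℝ (Fin n)} {m : ℝ} (hm : 0 ≤ m)
    (h : ∀ i, |x i - y i| ≤ m) : dist x y ≤ Real.sqrt n * m := by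
  rw [EuclideanSpace.dist_eq]
  have h1 : ∑ i, dist (x i) (y i) ^ 2 ≤ (n : ℝ) * m ^ 2 := by
    calc ∑ i, dist (x i) (y i) ^ 2 ≤ ∑ _i : Fin n, m ^ 2 := by
          apply Finset.sum_le_sum
          intro i _
          have := h i
          rw [Real.dist_eq]
          nlinarith [abs_nonneg (x i - y i), this]
      _ = (n : ℝ) * m ^ 2 := by simp [mul_comm]
  calc Real.sqrt (∑ i, dist (x i) (y i) ^ 2) ≤ Real.sqrt ((n : ℝ) * m ^ 2) :=
        Real.sqrt_le_sqrt h1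
    _ = Real.sqrt n * m := by
        rw [Real.sqrt_mul (Nat.cast_nonneg n), Real.sqrt_sq hm]

lemma continuous_coord (i : Fin n) : Continuous fun y : EuclideanSpace ℝ (Fin n) => y i := by
  refine (LipschitzWith.of_dist_le_mul (K := 1) fun a b => ?_).continuous
  rw [NNReal.coe_one, one_mul, Real.dist_eq]
  exact coord_le_dist a b i

lemma isClosed_cube (c : EuclideanSpace ℝ (Fin n)) (t : ℝ) : IsClosed (cube c t) := by
  have : cube c t = ⋂ i, (fun y : EuclideanSpace ℝ (Fin n) => |y i - c i|) ⁻¹' Set.Iic (t / 2) := by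
    ext y; simp [cube]
  rw [this]
  exact isClosed_iInter fun i =>
    IsClosed.preimage (((continuous_coord i).sub continuous_const).abs) isClosed_Iic

lemma ball_subset_cube (c : EuclideanSpace ℝ (Fin n)) (t : ℝ) :
    Metric.ball c (t / 2) ⊆ cube c t := by
  intro y hy i
  exact (coord_le_dist y c i).trans (le_of_lt (Metric.mem_ball.1 hy))

lemma cube_subset_closedBall (c : EuclideanSpace ℝ (Fin n)) {t : ℝ} (ht : 0 ≤ t) :
    cube c t ⊆ Metric.closedBall c (Real.sqrt n * (t / 2)) := by
  intro y hy
  exact Metric.mem_closedBall.2 (dist_le_sqrt_mul (by linarith) hy)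

lemma isCompact_cube (c : EuclideanSpace ℝ (Fin n)) {t : ℝ} (ht : 0 ≤ t) :
    IsCompact (cube c t) :=
  (isCompact_closedBall c _).of_isClosed_subset (isClosed_cube c t) (cube_subset_closedBall c ht)

lemma volume_cube_pos (c : EuclideanSpace ℝ (Fin n)) {t : ℝ} (ht : 0 < t) :
    0 < volume (cube c t) :=
  lt_of_lt_of_le (Metric.measure_ball_pos volume c (by linarith : (0:ℝ) < t / 2))
    (measure_mono (ball_subset_cube c t))

lemma holder_continuous {b : EuclideanSpace ℝ (Fin n) → ℝ} {L β : ℝ} (hβ : 0 < β)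
    (h : ∀ x y, |b x - b y| ≤ L * dist x y ^ β) : Continuous b := by
  refine continuous_iff_continuousAt.2 fun x => ?_
  have hd : Filter.Tendsto (fun y : EuclideanSpace ℝ (Fin n) => dist y x) (nhds x) (nhds 0) := by
    simpa using (continuous_id.dist (continuous_const (y := x))).tendsto x
  have hc : Filter.Tendsto (fun d : ℝ => L * d ^ β) (nhds 0) (nhds 0) := by
    have h1 : ContinuousAt (fun d : ℝ => d ^ β) 0 :=
      Real.continuousAt_rpow_const 0 β (Or.inr hβ.le)
    have := (h1.const_smul L).tendsto
    simpa [Real.zero_rpow hβ.ne', Pi.smul_def] using this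
  have : Filter.Tendsto (fun y => dist (b y) (b x)) (nhds x) (nhds 0) := by
    refine squeeze_zero (fun y => dist_nonneg) (fun y => ?_) (hc.comp hd)
    rw [Real.dist_eq]; exact h y x
  exact tendsto_iff_dist_tendsto_zero.2 this

lemma abs_sub_average_le {S : Set (EuclideanSpace ℝ (Fin n))} (hS : MeasurableSet S)
    (h0 : volume S ≠ 0) (hfin : volume S ≠ ⊤) {b : EuclideanSpace ℝ (Fin n) → ℝ}
    (hb : IntegrableOn b S volume) (a M : ℝ) (h : ∀ w ∈ S, |a - b w| ≤ M) :
    |a - ⨍ w in S, b w| ≤ M := by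
  set V : ℝ := (volume S).toReal with hV
  have hVpos : 0 < V := ENNReal.toReal_pos h0 hfin
  have hconst : IntegrableOn (fun _ : EuclideanSpace ℝ (Fin n) => a) S volume := by
    exact integrableOn_const hfin
  have hsub : ∫ w in S, (a - b w) = V * a - ∫ w in S, b w := by
    rw [integral_sub hconst hb, setIntegral_const, smul_eq_mul]; rfl
  have hbound : |∫ w in S, (a - b w)| ≤ M * V := by
    have := norm_setIntegral_le_of_norm_le_const (μ := volume) (s := S)
      hfin.lt_top (f := fun w => a - b w) (C := M) (fun w hw => by
        rw [Real.norm_eq_abs]; exact h w hw)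
    rw [Real.norm_eq_abs] at this; exact this
  have havg : ⨍ w in S, b w = V⁻¹ * ∫ w in S, b w := by
    rw [setAverage_eq, smul_eq_mul]; rfl
  have key : a - ⨍ w in S, b w = V⁻¹ * ∫ w in S, (a - b w) := by
    rw [havg, hsub]
    field_simp
  rw [key, abs_mul, abs_of_nonneg (inv_nonneg.2 hVpos.le)]
  calc V⁻¹ * |∫ w in S, (a - b w)| ≤ V⁻¹ * (M * V) := by
        exact mul_le_mul_of_nonneg_left hbound (inv_nonneg.2 hVpos.le)
    _ = M := by field_simp

lemma lintegral_ball_le_maxFun (f : EuclideanSpace ℝ (Fin n) → ℝ≥0∞)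
    (x : EuclideanSpace ℝ (Fin n)) {R : ℝ} (hR : 0 < R) :
    ∫⁻ y in Metric.ball x R, f y ≤ ENNReal.ofReal R ^ n * maxFun f x := by
  have h0 : (ENNReal.ofReal R ^ n : ℝ≥0∞) ≠ 0 :=
    pow_ne_zero _ (by simpa using (ENNReal.ofReal_pos.2 hR).ne')
  have ht : (ENNReal.ofReal R ^ n : ℝ≥0∞) ≠ ⊤ := by
    exact ENNReal.pow_ne_top ENNReal.ofReal_ne_top
  have h1 : (ENNReal.ofReal R ^ n)⁻¹ * ∫⁻ y in Metric.ball x R, f y ≤ maxFun f x :=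
    le_iSup₂ (f := fun (r : ℝ) (_ : 0 < r) =>
      (ENNReal.ofReal r ^ n)⁻¹ * ∫⁻ y in Metric.ball x r, f y) R hR
  calc ∫⁻ y in Metric.ball x R, f y
      = ENNReal.ofReal R ^ n * ((ENNReal.ofReal R ^ n)⁻¹ * ∫⁻ y in Metric.ball x R, f y) := by
        rw [← mul_assoc, ENNReal.mul_inv_cancel h0 ht, one_mul]
    _ ≤ ENNReal.ofReal R ^ n * maxFun f x := mul_le_mul_right h1 _

lemma pow_rpow_comm {x : ℝ} (hx : 0 ≤ x) (k : ℕ) (β : ℝ) : (x ^ k) ^ β = (x ^ β) ^ k := by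
  rw [← Real.rpow_natCast x k, ← Real.rpow_natCast (x ^ β) k, ← Real.rpow_mul hx,
    ← Real.rpow_mul hx, mul_comm]

lemma key_ineq (hn : 0 < n) {β t L : ℝ} (hβ : 0 < β) (ht : 0 < t) (hL : 0 ≤ L) (k : ℕ) :
    t ^ n / ((3:ℝ) ^ k * t) ^ (2 * n) * (L * (Real.sqrt n * ((3:ℝ) ^ (k + 2) * t)) ^ β) *
      ((Real.sqrt n + 1) * ((3:ℝ) ^ (k + 2) * t)) ^ n ≤
    (Real.sqrt n * 9) ^ β * ((Real.sqrt n + 1) * 9) ^ n * L * t ^ β * ((3:ℝ) ^ (β - 1)) ^ k := by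
  set s : ℝ := Real.sqrt n with hs
  have hs0 : 0 < s := Real.sqrt_pos.2 (by exact_mod_cast hn)
  clear_value s
  clear hs
  obtain ⟨m, rfl⟩ : ∃ m, n = m + 1 := ⟨n - 1, (Nat.succ_pred_eq_of_pos hn).symm⟩
  have h3k : (0:ℝ) < 3 ^ k := by positivity
  have hLHS : t ^ (m + 1) / ((3:ℝ) ^ k * t) ^ (2 * (m + 1)) *
        (L * (s * ((3:ℝ) ^ (k + 2) * t)) ^ β) *
        ((s + 1) * ((3:ℝ) ^ (k + 2) * t)) ^ (m + 1) * ((3:ℝ) ^ m) ^ k =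
      (s * 9) ^ β * ((s + 1) * 9) ^ (m + 1) * L * t ^ β * ((3:ℝ) ^ (β - 1)) ^ k := by
    have e1 : (s * ((3:ℝ) ^ (k + 2) * t)) ^ β = s ^ β * (((3:ℝ) ^ β) ^ k * 9 ^ β) * t ^ β := by
      rw [pow_add]
      rw [Real.mul_rpow hs0.le (by positivity), Real.mul_rpow (by positivity) ht.le,
        Real.mul_rpow (by positivity) (by norm_num), pow_rpow_comm (by norm_num)]
      norm_num
      ring
    have e2 : (3:ℝ) ^ (β - 1) = 3 ^ β / 3 := by
      rw [Real.rpow_sub (by norm_num), Real.rpow_one]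
    have e5 : (s * 9) ^ β = s ^ β * 9 ^ β := Real.mul_rpow hs0.le (by norm_num)
    have ebase : (s + 1) * ((3:ℝ) ^ (k + 2) * t) = (s + 1) * ((3:ℝ) ^ k) * 9 * t := by
      rw [pow_add]; norm_num; ring
    have e6 : ((s + 1) * ((3:ℝ) ^ (k + 2) * t)) ^ (m + 1) =
        (s + 1) ^ (m + 1) * ((3:ℝ) ^ k) ^ (m + 1) * 9 ^ (m + 1) * t ^ (m + 1) := by
      rw [ebase, mul_pow, mul_pow, mul_pow]
    have e7 : ((s + 1) * (9:ℝ)) ^ (m + 1) = (s + 1) ^ (m + 1) * 9 ^ (m + 1) := mul_pow _ _ _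
    have e8 : ((3:ℝ) ^ k * t) ^ (2 * (m + 1)) =
        ((3:ℝ) ^ k) ^ (2 * (m + 1)) * t ^ (2 * (m + 1)) := mul_pow _ _ _
    rw [e1, e2, e5, e6, e7, e8]
    generalize (s + 1 : ℝ) = u
    have ht' : t ≠ 0 := ht.ne'
    have h3k' : ((3:ℝ) ^ k) ≠ 0 := h3k.ne'
    field_simp
    rw [div_pow]
    field_simp
    ring
  have hL0 : 0 ≤ t ^ (m + 1) / ((3:ℝ) ^ k * t) ^ (2 * (m + 1)) *
      (L * (s * ((3:ℝ) ^ (k + 2) * t)) ^ β) * ((s + 1) * ((3:ℝ) ^ (k + 2) * t)) ^ (m + 1) := by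
    positivity
  have hfac : (1:ℝ) ≤ ((3:ℝ) ^ m) ^ k := one_le_pow₀ (one_le_pow₀ (by norm_num))
  calc t ^ (m + 1) / ((3:ℝ) ^ k * t) ^ (2 * (m + 1)) * (L * (s * ((3:ℝ) ^ (k + 2) * t)) ^ β) *
      ((s + 1) * ((3:ℝ) ^ (k + 2) * t)) ^ (m + 1)
      ≤ t ^ (m + 1) / ((3:ℝ) ^ k * t) ^ (2 * (m + 1)) * (L * (s * ((3:ℝ) ^ (k + 2) * t)) ^ β) *
        ((s + 1) * ((3:ℝ) ^ (k + 2) * t)) ^ (m + 1) * ((3:ℝ) ^ m) ^ k :=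
        le_mul_of_one_le_right hL0 hfac
    _ = _ := hLHS

set_option maxHeartbeats 1000000 in
/-- For `b ∈ Λ̇_β` (seminorm at most `L`), a cube `Q = Q(c,t)` and `x_Q, x ∈ Q`,
`Σ_{k≥2} ∫_{3^kQ∖3^{k-1}Q} t^n/|x_Q-z|^{2n} |b(z)-b_{3Q}||f(z)| dz ≤ C L t^β M f(x)`. -/
theorem stmt3 (n : ℕ) (hn : 0 < n) (β : ℝ) (hβ : 0 < β) (hβ1 : β < 1) :
    ∃ C > 0, ∀ (b : EuclideanSpace ℝ (Fin n) → ℝ) (L : ℝ), 0 ≤ L →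
      (∀ x y, |b x - b y| ≤ L * dist x y ^ β) →
      ∀ f : EuclideanSpace ℝ (Fin n) → ℝ, LocallyIntegrable f volume →
      ∀ (c : EuclideanSpace ℝ (Fin n)) (t : ℝ), 0 < t →
      ∀ xQ ∈ cube c t, ∀ x ∈ cube c t,
        (∑' k : ℕ, ∫⁻ z in cube c (3 ^ (k + 2) * t) \ cube c (3 ^ (k + 1) * t),
            ENNReal.ofReal
              (t ^ n / dist xQ z ^ (2 * n) * |b z - ⨍ w in cube c (3 * t), b w| * |f z|)) ≤
          ENNReal.ofReal (C * L * t ^ β) * maxFun (fun y => ENNReal.ofReal |f y|) x := by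
  have hs0 : 0 < Real.sqrt n := Real.sqrt_pos.2 (by exact_mod_cast hn)
  set s : ℝ := Real.sqrt n with hs
  set r : ℝ := (3:ℝ) ^ (β - 1) with hrdef
  have hr0 : 0 < r := Real.rpow_pos_of_pos (by norm_num) _
  have hr1 : r < 1 := Real.rpow_lt_one_of_one_lt_of_neg (by norm_num) (by linarith)
  set C2 : ℝ := (s * 9) ^ β * ((s + 1) * 9) ^ n with hC2
  have hC2pos : 0 < C2 :=
    mul_pos (Real.rpow_pos_of_pos (by positivity) _) (pow_pos (by positivity) _)
  refine ⟨C2 * (1 - r)⁻¹, mul_pos hC2pos (inv_pos.2 (by linarith)), ?_⟩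
  intro b L hL hb f hf c t ht xQ hxQ x hx
  set A : ℝ≥0∞ := maxFun (fun y => ENNReal.ofReal |f y|) x with hA
  -- facts about the cube 3Q
  have hS3meas : MeasurableSet (cube c (3 * t)) := (isClosed_cube c (3 * t)).measurableSet
  have hS30 : volume (cube c (3 * t)) ≠ 0 := (volume_cube_pos c (by linarith)).ne'
  have hS3fin : volume (cube c (3 * t)) ≠ ⊤ :=
    ((isCompact_cube c (by linarith : (0:ℝ) ≤ 3 * t)).measure_lt_top).ne
  have hbint : IntegrableOn b (cube c (3 * t)) volume :=
    ((holder_continuous hβ hb).locallyIntegrable).integrableOn_isCompact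
      (isCompact_cube c (by linarith))
  -- per-term bound
  have hterm : ∀ k : ℕ,
      (∫⁻ z in cube c (3 ^ (k + 2) * t) \ cube c (3 ^ (k + 1) * t),
        ENNReal.ofReal
          (t ^ n / dist xQ z ^ (2 * n) * |b z - ⨍ w in cube c (3 * t), b w| * |f z|)) ≤
      ENNReal.ofReal (C2 * L * t ^ β * r ^ k) * A := by
    intro k
    have h3k1 : (1:ℝ) ≤ 3 ^ k := one_le_pow₀ (by norm_num)
    have hTk : (0:ℝ) < 3 ^ (k + 2) * t := by positivity
    have hRk : (0:ℝ) < (s + 1) * (3 ^ (k + 2) * t) := by positivity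
    set Ek : ℝ := t ^ n / ((3:ℝ) ^ k * t) ^ (2 * n) * (L * (s * (3 ^ (k + 2) * t)) ^ β)
      with hEkdef
    have hEk0 : 0 ≤ Ek := by positivity
    have hmeas : MeasurableSet (cube c (3 ^ (k + 2) * t) \ cube c (3 ^ (k + 1) * t)) :=
      (isClosed_cube _ _).measurableSet.diff (isClosed_cube _ _).measurableSet
    -- pointwise bound on the annulus
    have hpt : ∀ z ∈ cube c (3 ^ (k + 2) * t) \ cube c (3 ^ (k + 1) * t),
        ENNReal.ofReal
          (t ^ n / dist xQ z ^ (2 * n) * |b z - ⨍ w in cube c (3 * t), b w| * |f z|) ≤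
        ENNReal.ofReal (Ek * |f z|) := by
      rintro z ⟨hz1, hz2⟩
      -- distance lower bound
      obtain ⟨i, hi⟩ := not_forall.1 hz2
      push_neg at hi
      have hxQi := hxQ i
      have htri : |z i - c i| ≤ |z i - xQ i| + |xQ i - c i| := abs_sub_le _ _ _
      have hz3 : (3:ℝ) ^ (k + 1) * t / 2 = 3 * 3 ^ k * t / 2 := by rw [pow_succ]; ring
      have hdist : (3:ℝ) ^ k * t ≤ dist xQ z := by
        have h1 : (3:ℝ) ^ k * t ≤ |z i - xQ i| := by
          rw [hz3] at hi; nlinarith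
        calc (3:ℝ) ^ k * t ≤ |z i - xQ i| := h1
          _ = |xQ i - z i| := abs_sub_comm _ _
          _ ≤ dist xQ z := coord_le_dist xQ z i
      have hdpos : (0:ℝ) < dist xQ z := lt_of_lt_of_le (by positivity) hdist
      -- oscillation of b
      have hbz : |b z - ⨍ w in cube c (3 * t), b w| ≤ L * (s * (3 ^ (k + 2) * t)) ^ β := by
        refine abs_sub_average_le hS3meas hS30 hS3fin hbint _ _ (fun w hw => ?_)
        have hzc : dist z c ≤ s * (3 ^ (k + 2) * t / 2) :=
          cube_subset_closedBall c hTk.le hz1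
        have hwc : dist w c ≤ s * (3 * t / 2) :=
          cube_subset_closedBall c (by linarith : (0:ℝ) ≤ 3 * t) hw
        have hzw : dist z w ≤ s * (3 ^ (k + 2) * t) := by
          have h9 : (3:ℝ) ≤ 3 ^ (k + 2) := by
            calc (3:ℝ) ≤ 9 := by norm_num
              _ ≤ 3 ^ (k + 2) := by rw [pow_add]; nlinarith
          have h3t : 3 * t ≤ 3 ^ (k + 2) * t := by nlinarith
          calc dist z w ≤ dist z c + dist c w := dist_triangle z c w
            _ = dist z c + dist w c := by rw [dist_comm c w]
            _ ≤ s * (3 ^ (k + 2) * t / 2) + s * (3 * t / 2) := add_le_add hzc hwc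
            _ ≤ s * (3 ^ (k + 2) * t) := by
                nlinarith [mul_nonneg hs0.le (sub_nonneg.2 h3t)]
        calc |b z - b w| ≤ L * dist z w ^ β := hb z w
          _ ≤ L * (s * (3 ^ (k + 2) * t)) ^ β :=
            mul_le_mul_of_nonneg_left (Real.rpow_le_rpow dist_nonneg hzw hβ.le) hL
      apply ENNReal.ofReal_le_ofReal
      have hpow : ((3:ℝ) ^ k * t) ^ (2 * n) ≤ dist xQ z ^ (2 * n) :=
        pow_le_pow_left₀ (by positivity) hdist _
      have hdiv : t ^ n / dist xQ z ^ (2 * n) ≤ t ^ n / ((3:ℝ) ^ k * t) ^ (2 * n) :=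
        div_le_div_of_nonneg_left (by positivity) (by positivity) hpow
      calc t ^ n / dist xQ z ^ (2 * n) * |b z - ⨍ w in cube c (3 * t), b w| * |f z|
          ≤ t ^ n / ((3:ℝ) ^ k * t) ^ (2 * n) * (L * (s * (3 ^ (k + 2) * t)) ^ β) * |f z| := by
            apply mul_le_mul_of_nonneg_right _ (abs_nonneg _)
            exact mul_le_mul hdiv hbz (abs_nonneg _) (by positivity)
        _ = Ek * |f z| := rfl
    -- the annulus is contained in a ball around x
    have hsub : cube c (3 ^ (k + 2) * t) \ cube c (3 ^ (k + 1) * t) ⊆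
        Metric.ball x ((s + 1) * (3 ^ (k + 2) * t)) := by
      rintro z ⟨hz1, -⟩
      have hd : dist z x ≤ s * (3 ^ (k + 2) * t) := by
        apply dist_le_sqrt_mul hTk.le
        intro i
        have h1 := hz1 i
        have h2 := hx i
        have h3 : (3:ℝ) * t ≤ 3 ^ (k + 2) * t := by
          have : (3:ℝ) ≤ 3 ^ (k + 2) := by
            calc (3:ℝ) ≤ 9 := by norm_num
              _ ≤ 3 ^ (k + 2) := by rw [pow_add]; nlinarith
          nlinarith
        calc |z i - x i| ≤ |z i - c i| + |c i - x i| := abs_sub_le _ _ _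
          _ = |z i - c i| + |x i - c i| := by rw [abs_sub_comm (c i) (x i)]
          _ ≤ 3 ^ (k + 2) * t / 2 + t / 2 := add_le_add h1 h2
          _ ≤ 3 ^ (k + 2) * t := by nlinarith
      rw [Metric.mem_ball]
      calc dist z x ≤ s * (3 ^ (k + 2) * t) := hd
        _ < (s + 1) * (3 ^ (k + 2) * t) := by nlinarith
    calc (∫⁻ z in cube c (3 ^ (k + 2) * t) \ cube c (3 ^ (k + 1) * t),
          ENNReal.ofReal
            (t ^ n / dist xQ z ^ (2 * n) * |b z - ⨍ w in cube c (3 * t), b w| * |f z|))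
        ≤ ∫⁻ z in cube c (3 ^ (k + 2) * t) \ cube c (3 ^ (k + 1) * t),
            ENNReal.ofReal (Ek * |f z|) := setLIntegral_mono' hmeas hpt
      _ = ∫⁻ z in cube c (3 ^ (k + 2) * t) \ cube c (3 ^ (k + 1) * t),
            ENNReal.ofReal Ek * ENNReal.ofReal |f z| := by
          simp_rw [ENNReal.ofReal_mul hEk0]
      _ = ENNReal.ofReal Ek *
            ∫⁻ z in cube c (3 ^ (k + 2) * t) \ cube c (3 ^ (k + 1) * t),
              ENNReal.ofReal |f z| := lintegral_const_mul' _ _ ENNReal.ofReal_ne_top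
      _ ≤ ENNReal.ofReal Ek *
            ∫⁻ z in Metric.ball x ((s + 1) * (3 ^ (k + 2) * t)), ENNReal.ofReal |f z| :=
          mul_le_mul_right (lintegral_mono_set hsub) _
      _ ≤ ENNReal.ofReal Ek *
            (ENNReal.ofReal ((s + 1) * (3 ^ (k + 2) * t)) ^ n * A) :=
          mul_le_mul_right (lintegral_ball_le_maxFun _ x hRk) _
      _ = ENNReal.ofReal (Ek * ((s + 1) * (3 ^ (k + 2) * t)) ^ n) * A := by
          rw [← mul_assoc, ← ENNReal.ofReal_pow hRk.le, ← ENNReal.ofReal_mul hEk0]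
      _ ≤ ENNReal.ofReal (C2 * L * t ^ β * r ^ k) * A := by
          apply mul_le_mul_left
          apply ENNReal.ofReal_le_ofReal
          calc Ek * ((s + 1) * (3 ^ (k + 2) * t)) ^ n
              ≤ (s * 9) ^ β * ((s + 1) * 9) ^ n * L * t ^ β * r ^ k :=
                key_ineq hn hβ ht hL k
            _ = C2 * L * t ^ β * r ^ k := by rw [hC2]
  -- sum up
  have haux : 0 ≤ C2 * L * t ^ β := by positivity
  calc (∑' k : ℕ, ∫⁻ z in cube c (3 ^ (k + 2) * t) \ cube c (3 ^ (k + 1) * t),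
          ENNReal.ofReal
            (t ^ n / dist xQ z ^ (2 * n) * |b z - ⨍ w in cube c (3 * t), b w| * |f z|))
      ≤ ∑' k : ℕ, ENNReal.ofReal (C2 * L * t ^ β * r ^ k) * A := ENNReal.tsum_le_tsum hterm
    _ = (∑' k : ℕ, ENNReal.ofReal (C2 * L * t ^ β) * ENNReal.ofReal r ^ k) * A := by
        rw [← ENNReal.tsum_mul_right]
        congr 1
        funext k
        rw [ENNReal.ofReal_mul haux, ENNReal.ofReal_pow hr0.le]
    _ = ENNReal.ofReal (C2 * L * t ^ β) * (1 - ENNReal.ofReal r)⁻¹ * A := by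
        rw [ENNReal.tsum_mul_left, ENNReal.tsum_geometric]
    _ = ENNReal.ofReal (C2 * (1 - r)⁻¹ * L * t ^ β) * A := by
        congr 1
        have h1 : (1 : ℝ≥0∞) - ENNReal.ofReal r = ENNReal.ofReal (1 - r) := by
          rw [ENNReal.ofReal_sub _ hr0.le, ENNReal.ofReal_one]
        rw [h1, ← ENNReal.ofReal_inv_of_pos (by linarith), ← ENNReal.ofReal_mul haux]
        congr 1
        ring
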